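/- For the narrow-stencil (2,1) order SBP operator with the same interior Green's function G₂ ((G₂)_{i,j} = x_j(1−x_i/ℓ) for j ≤ i, symmetric) but boundary derivative stencils d_Lᵀ = (1/h)(−3/2, 2, −1/2, 0, …, 0) and d_Rᵀ = (1/h)(0, …, 0, 1/2, −2, 3/2), the vectors b_L = 𝟙 − x/ℓ − G₂d_L and b_R = x/ℓ + G₂d_R satisfy b_L = (1, −1/2, 0, …, 0)ᵀ and b_R = (0, …, 0, −1/2, 1)ᵀ; consequently ξ_L = ξ_R = 5/(2h) and, for n ≥ 4, ξ_C = 0. -/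
import Mathlib


open Matrix

lemma sum3L (n : ℕ) (hn : 4 ≤ n) (g : Fin (n+1) → ℝ)
    (hg : ∀ j : Fin (n+1), 2 < (j : ℕ) → g j = 0) :
    ∑ j, g j = g ⟨0, by omega⟩ + g ⟨1, by omega⟩ + g ⟨2, by omega⟩ := by
  rw [← Finset.sum_subset (Finset.subset_univ ({⟨0, by omega⟩, ⟨1, by omega⟩, ⟨2, by omega⟩} : Finset (Fin (n+1))))]
  · rw [Finset.sum_insert (by simp [Fin.ext_iff]), Finset.sum_insert (by simp [Fin.ext_iff]),
      Finset.sum_singleton]; ring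
  · intro j _ hj
    apply hg
    simp only [Finset.mem_insert, Finset.mem_singleton, Fin.ext_iff] at hj
    omega

lemma sum3R (n : ℕ) (hn : 4 ≤ n) (g : Fin (n+1) → ℝ)
    (hg : ∀ j : Fin (n+1), (j : ℕ) + 2 < n → g j = 0) :
    ∑ j, g j = g ⟨n-2, by omega⟩ + g ⟨n-1, by omega⟩ + g ⟨n, by omega⟩ := by
  rw [← Finset.sum_subset (Finset.subset_univ ({⟨n-2, by omega⟩, ⟨n-1, by omega⟩, ⟨n, by omega⟩} : Finset (Fin (n+1))))]
  · rw [Finset.sum_insert (by simp [Fin.ext_iff]; omega), Finset.sum_insert (by simp [Fin.ext_iff]; omega),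
      Finset.sum_singleton]; ring
  · intro j _ hj
    apply hg
    simp only [Finset.mem_insert, Finset.mem_singleton, Fin.ext_iff] at hj
    omega

set_option maxHeartbeats 1600000 in
/-- For the narrow-stencil (2,1) order SBP operator with one-sided boundary
derivative stencils `(-3/2, 2, -1/2)/h`: `b_L = (1, -1/2, 0, …, 0)ᵀ`,
`b_R = (0, …, 0, -1/2, 1)ᵀ`, `ξ_L = ξ_R = 5/(2h)` and `ξ_C = 0` (for `n ≥ 4`). -/
theorem stmt15 (n : ℕ) (hn : 4 ≤ n) (h : ℝ) (hh : 0 < h)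
    (x : Fin (n+1) → ℝ) (hx : x = fun (i : Fin (n+1)) => h * ((i : ℕ) : ℝ))
    (ℓ : ℝ) (hℓ : ℓ = n * h)
    (G2 : Matrix (Fin (n+1)) (Fin (n+1)) ℝ)
    (hG2 : G2 = Matrix.of fun (i j : Fin (n+1)) =>
      if (j : ℕ) ≤ (i : ℕ) then x j * (1 - x i / ℓ) else x i * (1 - x j / ℓ))
    (dL dR : Fin (n+1) → ℝ)
    (hdL : dL = fun (i : Fin (n+1)) =>
      if (i : ℕ) = 0 then -(3/2) / h
      else if (i : ℕ) = 1 then 2 / h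
      else if (i : ℕ) = 2 then -(1/2) / h else 0)
    (hdR : dR = fun (i : Fin (n+1)) =>
      if (i : ℕ) = n then (3/2) / h
      else if (i : ℕ) + 1 = n then -2 / h
      else if (i : ℕ) + 2 = n then (1/2) / h else 0)
    (bL bR : Fin (n+1) → ℝ)
    (hbL : bL = fun i => 1 - x i / ℓ - (G2 *ᵥ dL) i)
    (hbR : bR = fun i => x i / ℓ + (G2 *ᵥ dR) i) :
    (bL = fun (i : Fin (n+1)) =>
        if (i : ℕ) = 0 then 1 else if (i : ℕ) = 1 then -(1/2) else 0)
      ∧ (bR = fun (i : Fin (n+1)) =>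
        if (i : ℕ) = n then 1 else if (i : ℕ) + 1 = n then -(1/2) else 0)
      ∧ -(dL ⬝ᵥ bL) = 5 / (2 * h) ∧ dR ⬝ᵥ bR = 5 / (2 * h)
      ∧ dL ⬝ᵥ bR = 0 := by
  have hh0 : h ≠ 0 := ne_of_gt hh
  have hn0 : (n : ℝ) ≠ 0 := by
    have : (0:ℝ) < n := by exact_mod_cast Nat.lt_of_lt_of_le (by norm_num) hn
    exact ne_of_gt this
  subst hℓ
  have cast1 : ((n - 1 : ℕ) : ℝ) = (n : ℝ) - 1 := by
    have h1 : (1:ℕ) ≤ n := by omega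
    push_cast [h1]; ring
  have cast2 : ((n - 2 : ℕ) : ℝ) = (n : ℝ) - 2 := by
    have h2 : (2:ℕ) ≤ n := by omega
    push_cast [h2]; ring
  have e1 : ∀ i, (G2 *ᵥ dL) i =
      G2 i ⟨0, by omega⟩ * dL ⟨0, by omega⟩ + G2 i ⟨1, by omega⟩ * dL ⟨1, by omega⟩
        + G2 i ⟨2, by omega⟩ * dL ⟨2, by omega⟩ := by
    intro i
    have := sum3L n hn (fun j => G2 i j * dL j) (by
      intro j hj
      have : dL j = 0 := by
        rw [hdL]; simp only
        rw [if_neg (by omega), if_neg (by omega), if_neg (by omega)]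
      simp [this])
    simpa [Matrix.mulVec, dotProduct] using this
  have e2 : ∀ i, (G2 *ᵥ dR) i =
      G2 i ⟨n-2, by omega⟩ * dR ⟨n-2, by omega⟩ + G2 i ⟨n-1, by omega⟩ * dR ⟨n-1, by omega⟩
        + G2 i ⟨n, by omega⟩ * dR ⟨n, by omega⟩ := by
    intro i
    have := sum3R n hn (fun j => G2 i j * dR j) (by
      intro j hj
      have : dR j = 0 := by
        rw [hdR]; simp only
        rw [if_neg (by omega), if_neg (by omega), if_neg (by omega)]
      simp [this])
    simpa [Matrix.mulVec, dotProduct] using this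
  have HL : bL = fun (i : Fin (n+1)) =>
      if (i : ℕ) = 0 then 1 else if (i : ℕ) = 1 then -(1/2) else 0 := by
    funext i
    obtain ⟨iv, hiv⟩ := i
    simp only [hbL, e1]
    simp only [hG2, hdL, hx, Matrix.of_apply]
    norm_num
    by_cases h0 : iv = 0
    · subst h0
      split_ifs <;> first | omega | tauto | (field_simp <;> ring)
    · by_cases h1 : iv = 1
      · subst h1
        split_ifs <;> first | omega | tauto | (field_simp <;> ring)
      · have h2 : 2 ≤ iv := by omega
        split_ifs <;> first | omega | tauto | (field_simp <;> ring)
  have HR : bR = fun (i : Fin (n+1)) =>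
      if (i : ℕ) = n then 1 else if (i : ℕ) + 1 = n then -(1/2) else 0 := by
    funext i
    obtain ⟨iv, hiv⟩ := i
    simp only [hbR, e2]
    simp only [hG2, hdR, hx, Matrix.of_apply]
    norm_num
    simp only [cast1, cast2]
    by_cases h0 : iv = n
    · subst h0
      split_ifs <;> first | omega | tauto | (field_simp <;> ring)
    · by_cases h1 : iv + 1 = n
      · have hr : (iv : ℝ) = (n : ℝ) - 1 := by
          have := congrArg (Nat.cast : ℕ → ℝ) h1
          push_cast at this; linarith
        simp only [hr]
        split_ifs <;> first | omega | tauto | (field_simp <;> ring)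
      · by_cases hc2 : iv + 2 = n
        · have hr : (iv : ℝ) = (n : ℝ) - 2 := by
            have := congrArg (Nat.cast : ℕ → ℝ) hc2
            push_cast at this; linarith
          simp only [hr]
          split_ifs <;> first | omega | tauto | (field_simp <;> ring)
        · have h3 : iv + 3 ≤ n := by omega
          split_ifs <;> first | omega | tauto | (field_simp <;> ring)
  refine ⟨HL, HR, ?_, ?_, ?_⟩
  · have := sum3L n hn (fun j => dL j * bL j) (by
      intro j hj
      have : dL j = 0 := by
        rw [hdL]; simp only
        rw [if_neg (by omega), if_neg (by omega), if_neg (by omega)]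
      simp [this])
    simp only [dotProduct]
    rw [this, HL, hdL]
    norm_num
    (try split_ifs) <;> first | omega | tauto | (field_simp <;> ring) | ring
  · have := sum3R n hn (fun j => dR j * bR j) (by
      intro j hj
      have : dR j = 0 := by
        rw [hdR]; simp only
        rw [if_neg (by omega), if_neg (by omega), if_neg (by omega)]
      simp [this])
    simp only [dotProduct]
    rw [this, HR, hdR]
    norm_num
    (try split_ifs) <;> first | omega | tauto | (field_simp <;> ring) | ring
  · have := sum3L n hn (fun j => dL j * bR j) (by
      intro j hj
      have : dL j = 0 := by
        rw [hdL]; simp only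
        rw [if_neg (by omega), if_neg (by omega), if_neg (by omega)]
      simp [this])
    simp only [dotProduct]
    rw [this, hdL, HR]
    norm_num
    (try split_ifs) <;> first | omega | tauto | (field_simp <;> ring) | ring
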